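/- (Nonnegativity and boundedness of cascaded gaps.) For every β ≠ 0, every h ∈ {1,…,H}, every (s,a) ∈ S × A, and every partial trajectory τ_{h−1} of length h−1 with state–action pairs in S × A, one has 0 ≤ Δ_{h,β}(s,a; τ_{h−1}) ≤ (1/|β|)·( e^{|β|·H} − 1 ). -/

import Mathlib

open Real Filter Finset

namespace RiskMDP

variable {S A : Type*} [Fintype S] [Fintype A]

/-- Entropic value function of policy `pol`, by remaining-steps fuel:
`entV β r P pol H n s = V^pol_h(s)` with `h = H + 1 - n`. -/
noncomputable def entV (β : ℝ) (r : ℕ → S → A → ℝ) (P : ℕ → S → A → PMF S)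
    (pol : ℕ → S → A) (H : ℕ) : ℕ → S → ℝ
  | 0, _ => 0
  | n + 1, s =>
      r (H - n) s (pol (H - n) s) +
        (1 / β) * Real.log (∑ s' : S, (P (H - n) s (pol (H - n) s) s').toReal *
          Real.exp (β * entV β r P pol H n s'))

/-- Optimal entropic value function, by remaining-steps fuel. -/
noncomputable def entVstar (β : ℝ) (r : ℕ → S → A → ℝ) (P : ℕ → S → A → PMF S)
    (H : ℕ) : ℕ → S → ℝ
  | 0, _ => 0
  | n + 1, s =>
      ⨆ a : A, (r (H - n) s a +
        (1 / β) * Real.log (∑ s' : S, (P (H - n) s a s').toReal *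
          Real.exp (β * entVstar β r P H n s')))

/-- Entropic action-value function of policy `pol` at step `h`. -/
noncomputable def entQ (β : ℝ) (r : ℕ → S → A → ℝ) (P : ℕ → S → A → PMF S)
    (pol : ℕ → S → A) (H : ℕ) (h : ℕ) (s : S) (a : A) : ℝ :=
  r h s a + (1 / β) * Real.log (∑ s' : S, (P h s a s').toReal *
    Real.exp (β * entV β r P pol H (H - h) s'))

/-- Optimal entropic action-value function at step `h`. -/
noncomputable def entQstar (β : ℝ) (r : ℕ → S → A → ℝ) (P : ℕ → S → A → PMF S)
    (H : ℕ) (h : ℕ) (s : S) (a : A) : ℝ :=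
  r h s a + (1 / β) * Real.log (∑ s' : S, (P h s a s').toReal *
    Real.exp (β * entVstar β r P H (H - h) s'))

/-- Risk-neutral value function of policy `pol`, by remaining-steps fuel. -/
noncomputable def rnV (r : ℕ → S → A → ℝ) (P : ℕ → S → A → PMF S)
    (pol : ℕ → S → A) (H : ℕ) : ℕ → S → ℝ
  | 0, _ => 0
  | n + 1, s =>
      r (H - n) s (pol (H - n) s) +
        ∑ s' : S, (P (H - n) s (pol (H - n) s) s').toReal * rnV r P pol H n s'

/-- Risk-neutral optimal value function, by remaining-steps fuel. -/
noncomputable def rnVstar (r : ℕ → S → A → ℝ) (P : ℕ → S → A → PMF S)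
    (H : ℕ) : ℕ → S → ℝ
  | 0, _ => 0
  | n + 1, s =>
      ⨆ a : A, (r (H - n) s a +
        ∑ s' : S, (P (H - n) s a s').toReal * rnVstar r P H n s')

/-- Risk-neutral optimal action-value function at step `h`. -/
noncomputable def rnQstar (r : ℕ → S → A → ℝ) (P : ℕ → S → A → PMF S)
    (H : ℕ) (h : ℕ) (s : S) (a : A) : ℝ :=
  r h s a + ∑ s' : S, (P h s a s').toReal * rnVstar r P H (H - h) s'

/-- PMF on the list of states `(s_h, …, s_{h+n-1})` (so `n` states in total), starting from
state `s` at step `h` and following policy `pol`; built by iterated `PMF.bind`. -/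
noncomputable def traj (P : ℕ → S → A → PMF S) (pol : ℕ → S → A) :
    ℕ → ℕ → S → PMF (List S)
  | 0, _, _ => PMF.pure []
  | n + 1, h, s =>
      ((P h s (pol h s)).bind fun s' => traj P pol n (h + 1) s').map (fun l => s :: l)

/-- Cumulative reward `Σ_i r_{h+i}(s_{h+i}, pol_{h+i}(s_{h+i}))` along a list of states
starting at step `h`. -/
def listReward (r : ℕ → S → A → ℝ) (pol : ℕ → S → A) : ℕ → List S → ℝ
  | _, [] => 0
  | h, s :: l => r h s (pol h s) + listReward r pol (h + 1) l

/-- Cumulative reward `R(τ) = Σ_j r_j(s_j, a_j)` of a partial state–action trajectory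
whose first pair is at step `j`. -/
def pairReward (r : ℕ → S → A → ℝ) : ℕ → List (S × A) → ℝ
  | _, [] => 0
  | j, p :: l => r j p.1 p.2 + pairReward r (j + 1) l

/-- The normalizer `ψ_β`. -/
noncomputable def psi (β : ℝ) (H : ℕ) : ℝ :=
  if 0 < β then 1 / β else Real.exp (-β * H) / β

/-- The cascaded gap `Δ_{h,β}(s, a; τ)`. -/
noncomputable def cgap (β : ℝ) (r : ℕ → S → A → ℝ) (P : ℕ → S → A → PMF S)
    (H : ℕ) (h : ℕ) (s : S) (a : A) (τ : List (S × A)) : ℝ :=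
  psi β H * Real.exp (β * pairReward r 1 τ) *
    (Real.exp (β * entVstar β r P H (H + 1 - h) s) -
      Real.exp (β * entQstar β r P H h s a))

section Aux

lemma pmf_sum_toReal {S' : Type*} [Fintype S'] (p : PMF S') :
    ∑ s : S', (p s).toReal = 1 := by
  have h1 : ∑ s : S', p s = 1 := by rw [← p.tsum_coe, tsum_fintype]
  have h2 : (∑ s : S', p s).toReal = ∑ s : S', (p s).toReal :=
    ENNReal.toReal_sum (fun s _ => (p.apply_lt_top s).ne)
  rw [← h2, h1, ENNReal.toReal_one]

lemma sum_exp_pos {S' : Type*} [Fintype S'] (p : PMF S') (f : S' → ℝ) :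
    0 < ∑ s : S', (p s).toReal * Real.exp (f s) := by
  obtain ⟨s0, hs0⟩ : ∃ s : S', (p s).toReal ≠ 0 := by
    by_contra hc
    push_neg at hc
    have h := pmf_sum_toReal p
    simp only [hc, Finset.sum_const_zero] at h
    norm_num at h
  refine Finset.sum_pos' (fun s _ => by positivity) ⟨s0, Finset.mem_univ _, ?_⟩
  have h0 : 0 < (p s0).toReal := lt_of_le_of_ne ENNReal.toReal_nonneg (Ne.symm hs0)
  positivity

lemma lse_le {S' : Type*} [Fintype S'] (p : PMF S') {β d : ℝ} (hβ : β ≠ 0)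
    {f : S' → ℝ} (hf : ∀ s, f s ≤ d) :
    (1 / β) * Real.log (∑ s : S', (p s).toReal * Real.exp (β * f s)) ≤ d := by
  set T := ∑ s : S', (p s).toReal * Real.exp (β * f s) with hT
  have hTpos : 0 < T := sum_exp_pos p _
  have hsum1 : ∑ s : S', (p s).toReal * Real.exp (β * d) = Real.exp (β * d) := by
    rw [← Finset.sum_mul, pmf_sum_toReal, one_mul]
  rcases hβ.lt_or_gt with hneg | hpos
  · have hle : Real.exp (β * d) ≤ T := by
      rw [← hsum1]
      refine Finset.sum_le_sum fun s _ => ?_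
      exact mul_le_mul_of_nonneg_left
        (Real.exp_le_exp.2 (mul_le_mul_of_nonpos_left (hf s) hneg.le))
        ENNReal.toReal_nonneg
    have hlog : β * d ≤ Real.log T := by
      calc β * d = Real.log (Real.exp (β * d)) := (Real.log_exp _).symm
        _ ≤ Real.log T := Real.log_le_log (Real.exp_pos _) hle
    rw [one_div, inv_mul_eq_div, div_le_iff_of_neg hneg]
    linarith
  · have hle : T ≤ Real.exp (β * d) := by
      rw [← hsum1]
      refine Finset.sum_le_sum fun s _ => ?_
      exact mul_le_mul_of_nonneg_left
        (Real.exp_le_exp.2 (mul_le_mul_of_nonneg_left (hf s) hpos.le))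
        ENNReal.toReal_nonneg
    have hlog : Real.log T ≤ β * d := by
      calc Real.log T ≤ Real.log (Real.exp (β * d)) := Real.log_le_log hTpos hle
        _ = β * d := Real.log_exp _
    rw [one_div, inv_mul_eq_div, div_le_iff₀ hpos]
    linarith

lemma le_lse {S' : Type*} [Fintype S'] (p : PMF S') {β c : ℝ} (hβ : β ≠ 0)
    {f : S' → ℝ} (hf : ∀ s, c ≤ f s) :
    c ≤ (1 / β) * Real.log (∑ s : S', (p s).toReal * Real.exp (β * f s)) := by
  set T := ∑ s : S', (p s).toReal * Real.exp (β * f s) with hT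
  have hTpos : 0 < T := sum_exp_pos p _
  have hsum1 : ∑ s : S', (p s).toReal * Real.exp (β * c) = Real.exp (β * c) := by
    rw [← Finset.sum_mul, pmf_sum_toReal, one_mul]
  rcases hβ.lt_or_gt with hneg | hpos
  · have hle : T ≤ Real.exp (β * c) := by
      rw [← hsum1]
      refine Finset.sum_le_sum fun s _ => ?_
      exact mul_le_mul_of_nonneg_left
        (Real.exp_le_exp.2 (mul_le_mul_of_nonpos_left (hf s) hneg.le))
        ENNReal.toReal_nonneg
    have hlog : Real.log T ≤ β * c := by
      calc Real.log T ≤ Real.log (Real.exp (β * c)) := Real.log_le_log hTpos hle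
        _ = β * c := Real.log_exp _
    rw [one_div, inv_mul_eq_div, le_div_iff_of_neg hneg]
    linarith
  · have hle : Real.exp (β * c) ≤ T := by
      rw [← hsum1]
      refine Finset.sum_le_sum fun s _ => ?_
      exact mul_le_mul_of_nonneg_left
        (Real.exp_le_exp.2 (mul_le_mul_of_nonneg_left (hf s) hpos.le))
        ENNReal.toReal_nonneg
    have hlog : β * c ≤ Real.log T := by
      calc β * c = Real.log (Real.exp (β * c)) := (Real.log_exp _).symm
        _ ≤ Real.log T := Real.log_le_log (Real.exp_pos _) hle
    rw [one_div, inv_mul_eq_div, le_div_iff₀ hpos]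
    linarith

lemma entVstar_bounds [Nonempty A] {β : ℝ} (hβ : β ≠ 0) (H : ℕ)
    (r : ℕ → S → A → ℝ) (hr : ∀ h ∈ Finset.Icc 1 H, ∀ s a, 0 ≤ r h s a ∧ r h s a ≤ 1)
    (P : ℕ → S → A → PMF S) :
    ∀ n, n ≤ H → ∀ s : S, 0 ≤ entVstar β r P H n s ∧ entVstar β r P H n s ≤ n := by
  intro n
  induction n with
  | zero => intro _ s; simp [entVstar]
  | succ n ih =>
    intro hn s
    have hstep : H - n ∈ Finset.Icc 1 H := by simp only [Finset.mem_Icc]; omega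
    have hV := fun s' => ih (by omega) s'
    simp only [entVstar]
    set g : A → ℝ := fun a => r (H - n) s a +
      (1 / β) * Real.log (∑ s' : S, (P (H - n) s a s').toReal *
        Real.exp (β * entVstar β r P H n s')) with hg
    have hg0 : ∀ a, 0 ≤ g a := fun a =>
      add_nonneg (hr _ hstep s a).1 (le_lse _ hβ (fun s' => (hV s').1))
    have hg1 : ∀ a, g a ≤ (n : ℝ) + 1 := fun a => by
      have h1 := lse_le (P (H - n) s a) hβ
        (f := fun s' => entVstar β r P H n s') (d := (n : ℝ)) (fun s' => (hV s').2)
      have h2 := (hr _ hstep s a).2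
      simp only [hg]
      linarith
    constructor
    · exact le_trans (hg0 (Classical.arbitrary A))
        (le_ciSup (Set.Finite.bddAbove (Set.finite_range g)) _)
    · push_cast
      exact ciSup_le hg1

lemma pairReward_bounds (H : ℕ) (r : ℕ → S → A → ℝ)
    (hr : ∀ h ∈ Finset.Icc 1 H, ∀ s a, 0 ≤ r h s a ∧ r h s a ≤ 1) :
    ∀ (τ : List (S × A)) (j : ℕ), 1 ≤ j → j + τ.length ≤ H + 1 →
      0 ≤ pairReward r j τ ∧ pairReward r j τ ≤ (τ.length : ℝ) := by
  intro τ
  induction τ with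
  | nil => intro j _ _; simp [pairReward]
  | cons q l ih =>
    intro j hj hlen
    simp only [List.length_cons] at hlen ⊢
    have hjm : j ∈ Finset.Icc 1 H := by simp only [Finset.mem_Icc]; omega
    have h1 := hr j hjm q.1 q.2
    have h2 := ih (j + 1) (by omega) (by omega)
    simp only [pairReward]
    push_cast
    constructor <;> linarith [h1.1, h1.2, h2.1, h2.2]

end Aux

/-- Nonnegativity and boundedness of the cascaded gaps:
`0 ≤ Δ_{h,β}(s,a;τ_{h-1}) ≤ (1/|β|) (e^{|β|H} - 1)`. -/
theorem cascaded_gap_nonneg_and_bounded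
    {S A : Type*} [Fintype S] [Nonempty S] [Fintype A] [Nonempty A]
    (H : ℕ) (hH : 1 ≤ H)
    (r : ℕ → S → A → ℝ) (hr : ∀ h ∈ Finset.Icc 1 H, ∀ s a, 0 ≤ r h s a ∧ r h s a ≤ 1)
    (P : ℕ → S → A → PMF S) :
    ∀ (β : ℝ), β ≠ 0 → ∀ h ∈ Finset.Icc 1 H, ∀ (s : S) (a : A) (τ : List (S × A)),
      τ.length = h - 1 →
      0 ≤ cgap β r P H h s a τ ∧
        cgap β r P H h s a τ ≤ (1 / |β|) * (Real.exp (|β| * H) - 1) := by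
  intro β hβ h hh s a τ hτ
  rw [Finset.mem_Icc] at hh
  obtain ⟨hh1, hh2⟩ := hh
  have hVQ : entVstar β r P H (H + 1 - h) s = ⨆ a' : A, entQstar β r P H h s a' := by
    rw [show H + 1 - h = (H - h) + 1 from by omega]
    simp only [entVstar, entQstar, show H - (H - h) = h from by omega]
  have hVb := entVstar_bounds hβ H r hr P (H + 1 - h) (by omega) s
  have hV'b := fun s' => entVstar_bounds hβ H r hr P (H - h) (by omega) s'
  have hQ0 : 0 ≤ entQstar β r P H h s a := by
    have h1 := le_lse (P h s a) hβ (c := 0)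
      (f := fun s' => entVstar β r P H (H - h) s') (fun s' => (hV'b s').1)
    have h2 := (hr h (by simp only [Finset.mem_Icc]; omega) s a).1
    simp only [entQstar]
    linarith
  have hQleV : entQstar β r P H h s a ≤ entVstar β r P H (H + 1 - h) s := by
    rw [hVQ]
    exact le_ciSup (Set.Finite.bddAbove (Set.finite_range _)) a
  have hVle : entVstar β r P H (H + 1 - h) s ≤ (H : ℝ) + 1 - (h : ℝ) := by
    have h1 := hVb.2
    rw [Nat.cast_sub (by omega)] at h1
    push_cast at h1
    linarith
  have hRb := pairReward_bounds H r hr τ 1 le_rfl (by omega)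
  have hR0 : 0 ≤ pairReward r 1 τ := hRb.1
  have hRle : pairReward r 1 τ ≤ (h : ℝ) - 1 := by
    have h1 := hRb.2
    rw [hτ, Nat.cast_sub hh1] at h1
    push_cast at h1
    linarith
  simp only [cgap, psi]
  set V := entVstar β r P H (H + 1 - h) s with hV
  set Q := entQstar β r P H h s a with hQ
  set R := pairReward r 1 τ with hRdef
  rcases hβ.lt_or_gt with hneg | hpos
  · -- β < 0
    rw [if_neg (not_lt.2 hneg.le), abs_of_neg hneg]
    have hA : Real.exp (-β * (H : ℝ)) * Real.exp (β * R) * Real.exp (β * Q)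
        = Real.exp (β * R + β * Q - β * (H : ℝ)) := by
      rw [← Real.exp_add, ← Real.exp_add]; congr 1; ring
    have hB : Real.exp (-β * (H : ℝ)) * Real.exp (β * R) * Real.exp (β * V)
        = Real.exp (β * R + β * V - β * (H : ℝ)) := by
      rw [← Real.exp_add, ← Real.exp_add]; congr 1; ring
    have key : Real.exp (-β * (H : ℝ)) / β * Real.exp (β * R) *
        (Real.exp (β * V) - Real.exp (β * Q))
        = (1 / (-β)) * (Real.exp (β * R + β * Q - β * (H : ℝ)) -
            Real.exp (β * R + β * V - β * (H : ℝ))) := by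
      rw [← hA, ← hB]; field_simp [hneg.ne]; ring
    rw [key]
    have hc : (0 : ℝ) < 1 / (-β) := by
      have : (0 : ℝ) < -β := neg_pos.2 hneg
      positivity
    have hX : 1 ≤ Real.exp (β * R + β * V - β * (H : ℝ)) := by
      apply Real.one_le_exp
      have hm : 0 ≤ (-β) * ((H : ℝ) - R - V) :=
        mul_nonneg (neg_nonneg.2 hneg.le) (by linarith)
      nlinarith
    have hY : Real.exp (β * R + β * Q - β * (H : ℝ)) ≤ Real.exp (-β * (H : ℝ)) := by
      apply Real.exp_le_exp.2
      have hm : 0 ≤ (-β) * (R + Q) :=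
        mul_nonneg (neg_nonneg.2 hneg.le) (by linarith)
      nlinarith
    constructor
    · apply mul_nonneg hc.le
      have hm : 0 ≤ (-β) * (V - Q) :=
        mul_nonneg (neg_nonneg.2 hneg.le) (by linarith)
      have : Real.exp (β * R + β * V - β * (H : ℝ))
          ≤ Real.exp (β * R + β * Q - β * (H : ℝ)) :=
        Real.exp_le_exp.2 (by nlinarith)
      linarith
    · exact mul_le_mul_of_nonneg_left (by linarith) hc.le
  · -- β > 0
    rw [if_pos hpos, abs_of_pos hpos]
    have hA : Real.exp (β * R) * Real.exp (β * Q) = Real.exp (β * R + β * Q) := by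
      rw [← Real.exp_add]
    have hB : Real.exp (β * R) * Real.exp (β * V) = Real.exp (β * R + β * V) := by
      rw [← Real.exp_add]
    have key : 1 / β * Real.exp (β * R) * (Real.exp (β * V) - Real.exp (β * Q))
        = (1 / β) * (Real.exp (β * R + β * V) - Real.exp (β * R + β * Q)) := by
      rw [← hA, ← hB]; ring
    rw [key]
    have hc : (0 : ℝ) < 1 / β := by positivity
    have hX : 1 ≤ Real.exp (β * R + β * Q) := by
      apply Real.one_le_exp
      have h1 : 0 ≤ β * R := mul_nonneg hpos.le hR0
      have h2 : 0 ≤ β * Q := mul_nonneg hpos.le hQ0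
      linarith
    have hY : Real.exp (β * R + β * V) ≤ Real.exp (β * (H : ℝ)) := by
      apply Real.exp_le_exp.2
      have hm : 0 ≤ β * ((H : ℝ) - R - V) := mul_nonneg hpos.le (by linarith)
      nlinarith
    constructor
    · apply mul_nonneg hc.le
      have : Real.exp (β * R + β * Q) ≤ Real.exp (β * R + β * V) := by
        apply Real.exp_le_exp.2
        have := mul_le_mul_of_nonneg_left hQleV hpos.le
        linarith
      linarith
    · exact mul_le_mul_of_nonneg_left (by linarith) hc.le

end RiskMDP
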